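/- Let n = pq with p, q distinct primes, let e be coprime to φ(n), and let k be a positive integer. Define E_{n,e,k} = {x ∈ Z_n : x^(e^k) ≡ x (mod n), and x^(e^j) ≢ x (mod n) for all positive j < k}. Then |E_{n,e,k}| = Σ_{d | k} μ(k/d) · (gcd(e^d − 1, p − 1) + 1) · (gcd(e^d − 1, q − 1) + 1). -/

import Mathlib

open Finset

lemma cyc_count (G : Type*) [Group G] [Fintype G] [IsCyclic G] (m : ℕ) :
    Nat.card {u : G // u ^ m = 1} = Nat.gcd m (Fintype.card G) := by
  classical
  rcases Nat.eq_zero_or_pos m with rfl | hm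
  · rw [Nat.gcd_zero_left]
    rw [Nat.card_congr (Equiv.subtypeUnivEquiv (fun u => pow_zero u))]
    exact Nat.card_eq_fintype_card
  · set N := Fintype.card G with hN
    set g := Nat.gcd m N with hg
    have hgN : g ∣ N := Nat.gcd_dvd_right m N
    have hg0 : g ≠ 0 := (Nat.gcd_pos_of_pos_left N hm).ne'
    have hiff : ∀ u : G, u ^ m = 1 ↔ u ^ g = 1 := by
      intro u
      rw [← orderOf_dvd_iff_pow_eq_one, ← orderOf_dvd_iff_pow_eq_one]
      exact ⟨fun h => Nat.dvd_gcd h (orderOf_dvd_card), fun h => h.trans (Nat.gcd_dvd_left m N)⟩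
    rw [Nat.card_congr (Equiv.subtypeEquivRight hiff)]
    rw [Nat.card_eq_fintype_card, Fintype.card_subtype]
    have h1 := sum_card_orderOf_eq_card_pow_eq_one (G := G) (n := g) hg0
    have h2 : (∑ d ∈ g.divisors, #(filter (fun x : G => orderOf x = d) univ)) = g := by
      conv_rhs => rw [← Nat.sum_totient g]
      exact sum_congr rfl fun d hd =>
        IsCyclic.card_orderOf_eq_totient ((Nat.mem_divisors.mp hd).1.trans hgN)
    exact h1.symm.trans h2

lemma field_count (p : ℕ) [Fact p.Prime] {E : ℕ} (hE : 1 ≤ E) :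
    Nat.card {a : ZMod p // a ^ E = a} = Nat.gcd (E - 1) (p - 1) + 1 := by
  classical
  have hE0 : E ≠ 0 := by omega
  have hEeq : E - 1 + 1 = E := by omega
  have keyiff : ∀ a : ZMod p, a ≠ 0 → (a ^ E = a ↔ a ^ (E - 1) = 1) := by
    intro a ha
    constructor
    · intro h
      rw [← hEeq, pow_succ] at h
      have := mul_right_cancel₀ ha (h.trans (one_mul a).symm)
      exact this
    · intro h
      rw [← hEeq, pow_succ, h, one_mul]
  rw [Nat.card_eq_fintype_card, Fintype.card_subtype]
  have h1 : Finset.univ.filter (fun a : ZMod p => a ^ E = a)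
      = insert (0 : ZMod p)
          (Finset.univ.filter (fun a : ZMod p => a ≠ 0 ∧ a ^ (E - 1) = 1)) := by
    ext a
    simp only [Finset.mem_filter, Finset.mem_univ, true_and, Finset.mem_insert]
    by_cases h0 : a = 0
    · simp [h0, zero_pow hE0]
    · simp [h0, keyiff a h0]
  rw [h1, Finset.card_insert_of_notMem (by simp)]
  have e2 : {u : (ZMod p)ˣ // u ^ (E - 1) = 1}
      ≃ {a : ZMod p // a ≠ 0 ∧ a ^ (E - 1) = 1} := by
    refine Equiv.trans (Equiv.subtypeEquiv unitsEquivNeZero ?_)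
      (Equiv.subtypeSubtypeEquivSubtypeInter (fun a : ZMod p => a ≠ 0)
        (fun a => a ^ (E - 1) = 1))
    intro u
    simp [Units.ext_iff]
  have h2 : (Finset.univ.filter (fun a : ZMod p => a ≠ 0 ∧ a ^ (E - 1) = 1)).card
      = Nat.gcd (E - 1) (p - 1) := by
    rw [← Fintype.card_subtype, ← Nat.card_eq_fintype_card, ← Nat.card_congr e2,
      cyc_count, ZMod.card_units]
  rw [h2]

lemma pq_count (p q : ℕ) [Fact p.Prime] [Fact q.Prime] (hpq : p ≠ q) {E : ℕ} (hE : 1 ≤ E) :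
    Nat.card {x : ZMod (p * q) // x ^ E = x}
      = (Nat.gcd (E - 1) (p - 1) + 1) * (Nat.gcd (E - 1) (q - 1) + 1) := by
  have hco : Nat.Coprime p q := (Nat.coprime_primes Fact.out Fact.out).mpr hpq
  let crt := ZMod.chineseRemainder hco
  have e1 : {x : ZMod (p * q) // x ^ E = x} ≃ {z : ZMod p × ZMod q // z ^ E = z} :=
    Equiv.subtypeEquiv crt.toEquiv (by
      intro x
      constructor
      · intro h
        show crt x ^ E = crt x
        rw [← map_pow, h]
      · intro h
        have hx : crt (x ^ E) = crt x := by rw [map_pow]; exact h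
        exact crt.injective hx)
  have e2 : {z : ZMod p × ZMod q // z ^ E = z}
      ≃ {a : ZMod p // a ^ E = a} × {b : ZMod q // b ^ E = b} :=
    (Equiv.subtypeEquivRight (fun z => by simp [Prod.ext_iff])).trans
      Equiv.subtypeProdEquivProd
  rw [Nat.card_congr (e1.trans e2), Nat.card_prod, field_count p hE, field_count q hE]

theorem stmt4 (p q e k : ℕ) (hp : p.Prime) (hq : q.Prime) (hpq : p ≠ q)
    (he : Nat.Coprime e (Nat.totient (p * q))) (hk : 0 < k) :
    (Nat.card {x : ℕ // x < p * q ∧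
        x ^ e ^ k ≡ x [MOD p * q] ∧
        ∀ j, 0 < j → j < k → ¬ x ^ e ^ j ≡ x [MOD p * q]} : ℤ) =
      ∑ d ∈ k.divisors, (ArithmeticFunction.moebius (k / d)) *
        ((Nat.gcd (e ^ d - 1) (p - 1) : ℤ) + 1) * ((Nat.gcd (e ^ d - 1) (q - 1) : ℤ) + 1) := by
  classical
  haveI : Fact p.Prime := ⟨hp⟩
  haveI : Fact q.Prime := ⟨hq⟩
  have hn0 : p * q ≠ 0 := Nat.mul_ne_zero hp.pos.ne' hq.pos.ne'
  haveI : NeZero (p * q) := ⟨hn0⟩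
  have hco : Nat.Coprime p q := (Nat.coprime_primes hp hq).mpr hpq
  -- e ≥ 1
  have he1 : 1 ≤ e := by
    rcases Nat.eq_zero_or_pos e with rfl | h
    · exfalso
      have h1 : Nat.totient (p * q) = 1 := by
        simpa [Nat.coprime_zero_left] using he
      rw [Nat.totient_mul hco, Nat.totient_prime hp, Nat.totient_prime hq] at h1
      have h2 := hp.two_le
      have h3 := hq.two_le
      have hle1 : p - 1 ≤ 1 := Nat.le_of_dvd one_pos ⟨q - 1, h1.symm⟩
      have hle2 : q - 1 ≤ 1 := Nat.le_of_dvd one_pos ⟨p - 1, by rw [mul_comm]; exact h1.symm⟩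
      omega
    · exact h
  -- the iteration map
  set f : ZMod (p * q) → ZMod (p * q) := fun x => x ^ e with hf
  have hiter : ∀ (j : ℕ) (x : ZMod (p * q)), f^[j] x = x ^ e ^ j := by
    intro j
    induction j with
    | zero => intro x; simp
    | succ j ih =>
      intro x
      rw [Function.iterate_succ_apply, ih, hf, ← pow_mul, ← pow_succ']
  have hper : ∀ (j : ℕ) (x : ZMod (p * q)),
      Function.IsPeriodicPt f j x ↔ x ^ e ^ j = x := by
    intro j x
    unfold Function.IsPeriodicPt Function.IsFixedPt
    rw [hiter]
  have hmod : ∀ (x E : ℕ), (x ^ E ≡ x [MOD p * q]) ↔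
      ((x : ZMod (p * q)) ^ E = (x : ZMod (p * q))) := by
    intro x E
    rw [← Nat.cast_pow, ZMod.natCast_eq_natCast_iff]
  have hmin : ∀ x : ZMod (p * q),
      (x ^ e ^ k = x ∧ ∀ j, 0 < j → j < k → ¬ x ^ e ^ j = x) ↔
        Function.minimalPeriod f x = k := by
    intro x
    constructor
    · rintro ⟨h1, h2⟩
      have hp1 : Function.IsPeriodicPt f k x := (hper k x).mpr h1
      have hd := hp1.minimalPeriod_dvd
      have hpos := hp1.minimalPeriod_pos hk
      rcases lt_or_eq_of_le (Nat.le_of_dvd hk hd) with hlt | heq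
      · exact absurd ((hper _ x).mp (Function.isPeriodicPt_minimalPeriod f x))
          (h2 _ hpos hlt)
      · exact heq
    · intro h
      constructor
      · exact (hper k x).mp (h ▸ Function.isPeriodicPt_minimalPeriod f x)
      · intro j hj0 hjk hcon
        have hdd := ((hper j x).mpr hcon).minimalPeriod_dvd
        rw [h] at hdd
        exact absurd (Nat.le_of_dvd hj0 hdd) (not_le.mpr hjk)
  -- the main card equals the exact-period count
  have main_equiv : {x : ℕ // x < p * q ∧ x ^ e ^ k ≡ x [MOD p * q] ∧
        ∀ j, 0 < j → j < k → ¬ x ^ e ^ j ≡ x [MOD p * q]}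
      ≃ {y : ZMod (p * q) // y ^ e ^ k = y ∧ ∀ j, 0 < j → j < k → ¬ y ^ e ^ j = y} :=
    { toFun := fun x => ⟨(x.1 : ZMod (p * q)), by
        obtain ⟨hx, h1, h2⟩ := x.2
        exact ⟨(hmod _ _).mp h1, fun j hj0 hjk hc => h2 j hj0 hjk ((hmod _ _).mpr hc)⟩⟩
      invFun := fun y => ⟨y.1.val, ZMod.val_lt y.1, by
        obtain ⟨h1, h2⟩ := y.2
        have hy : ((y.1.val : ℕ) : ZMod (p * q)) = y.1 := ZMod.natCast_rightInverse y.1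
        constructor
        · rw [hmod, hy]; exact h1
        · intro j hj0 hjk hc
          rw [hmod, hy] at hc
          exact h2 j hj0 hjk hc⟩
      left_inv := fun x => Subtype.ext (ZMod.val_cast_of_lt x.2.1)
      right_inv := fun y => Subtype.ext (ZMod.natCast_rightInverse y.1) }
  have hmain : Nat.card {x : ℕ // x < p * q ∧ x ^ e ^ k ≡ x [MOD p * q] ∧
        ∀ j, 0 < j → j < k → ¬ x ^ e ^ j ≡ x [MOD p * q]}
      = Nat.card {y : ZMod (p * q) // Function.minimalPeriod f y = k} :=
    Nat.card_congr (main_equiv.trans (Equiv.subtypeEquivRight hmin))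
  -- divisor-sum identity
  have key : ∀ d, 0 < d →
      ∑ m ∈ d.divisors, (Nat.card {y : ZMod (p * q) // Function.minimalPeriod f y = m} : ℤ)
        = ((Nat.gcd (e ^ d - 1) (p - 1) : ℤ) + 1) * ((Nat.gcd (e ^ d - 1) (q - 1) : ℤ) + 1) := by
    intro d hd
    have hE : 1 ≤ e ^ d := Nat.one_le_pow _ _ he1
    have hnat : Nat.card {x : ZMod (p * q) // x ^ e ^ d = x}
        = ∑ m ∈ d.divisors, Nat.card {y : ZMod (p * q) // Function.minimalPeriod f y = m} := by
      have hsub : ∀ x : ZMod (p * q),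
          (x ^ e ^ d = x) ↔ Function.minimalPeriod f x ∣ d := by
        intro x
        rw [← hper, Function.isPeriodicPt_iff_minimalPeriod_dvd]
      rw [Nat.card_congr (Equiv.subtypeEquivRight hsub)]
      rw [Nat.card_eq_fintype_card, Fintype.card_subtype]
      rw [Finset.card_eq_sum_card_fiberwise
        (f := fun x : ZMod (p * q) => Function.minimalPeriod f x) (t := d.divisors)
        (fun x hx => by
          simp only [Finset.mem_coe, Finset.mem_filter, Finset.mem_univ, true_and] at hx
          exact Nat.mem_divisors.mpr ⟨hx, hd.ne'⟩)]
      apply Finset.sum_congr rfl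
      intro m hm
      have hfib : (Finset.univ.filter
            (fun x : ZMod (p * q) => Function.minimalPeriod f x ∣ d)).filter
            (fun x => Function.minimalPeriod f x = m)
          = Finset.univ.filter (fun x : ZMod (p * q) => Function.minimalPeriod f x = m) := by
        ext x
        simp only [Finset.mem_filter, Finset.mem_univ, true_and]
        exact ⟨fun h => h.2, fun h => ⟨h ▸ (Nat.mem_divisors.mp hm).1, h⟩⟩
      rw [hfib, ← Fintype.card_subtype, ← Nat.card_eq_fintype_card]
    have hF : (Nat.card {x : ZMod (p * q) // x ^ e ^ d = x} : ℤ)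
        = ((Nat.gcd (e ^ d - 1) (p - 1) : ℤ) + 1) * ((Nat.gcd (e ^ d - 1) (q - 1) : ℤ) + 1) := by
      rw [pq_count p q hpq hE]
      push_cast
      ring
    rw [← hF, hnat]
    push_cast
    rfl
  -- Möbius inversion
  have inv := (ArithmeticFunction.sum_eq_iff_sum_smul_moebius_eq (R := ℤ)
      (f := fun m => (Nat.card {y : ZMod (p * q) // Function.minimalPeriod f y = m} : ℤ))
      (g := fun d => ((Nat.gcd (e ^ d - 1) (p - 1) : ℤ) + 1) *
        ((Nat.gcd (e ^ d - 1) (q - 1) : ℤ) + 1))).mp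
    (fun d hd => key d hd) k hk
  rw [hmain, ← inv]
  rw [Nat.sum_divisorsAntidiagonal'
    (f := fun a b => (ArithmeticFunction.moebius a : ℤ) •
      (((Nat.gcd (e ^ b - 1) (p - 1) : ℤ) + 1) * ((Nat.gcd (e ^ b - 1) (q - 1) : ℤ) + 1)))]
  apply Finset.sum_congr rfl
  intro d hd
  simp [mul_assoc]
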